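/- Let α ≥ 2 be an integer and β > 0 a real number with β < (1/2)·(α·H(1/α) − (α−1)·H(1/(2(α−1))) − 1). Then there exists a natural number k₀ (depending only on α and β) such that for every integer k ≥ k₀ there exists a family 𝒮 of subsets of Fin (α·k) satisfying: (1) every S ∈ 𝒮 has cardinality k; (2) the cardinality of 𝒮 equals ⌊2^{β·k}⌋; (3) for any two distinct S, S' ∈ 𝒮, the cardinality of S ∩ S' is at most k/2. -/

import Mathlib

/-- The binary entropy function `H(x) = -x·log₂ x - (1-x)·log₂(1-x)`. -/
noncomputable def binEnt (x : ℝ) : ℝ :=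
  -x * Real.logb 2 x - (1 - x) * Real.logb 2 (1 - x)

private lemma binEnt_eq (x : ℝ) : binEnt x = Real.binEntropy x / Real.log 2 := by
  unfold binEnt Real.binEntropy
  rw [Real.log_inv, Real.log_inv, Real.logb, Real.logb]
  ring

private lemma binEnt_mono {x y : ℝ} (hx : 0 ≤ x) (hxy : x ≤ y) (hy : y ≤ 1 / 2) :
    binEnt x ≤ binEnt y := by
  rw [binEnt_eq, binEnt_eq]
  have h2 : (0:ℝ) < Real.log 2 := Real.log_pos one_lt_two
  have hmono := Real.binEntropy_strictMonoOn.monotoneOn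
  have hxm : x ∈ Set.Icc (0:ℝ) 2⁻¹ := ⟨hx, by linarith [hy, hxy]⟩
  have hym : y ∈ Set.Icc (0:ℝ) 2⁻¹ := ⟨le_trans hx hxy, by linarith [hy]⟩
  exact div_le_div_of_nonneg_right (c := Real.log 2) (hmono hxm hym hxy) h2.le


open Finset

private def trm (n m i : ℕ) : ℕ := n.choose i * m ^ i * (n - m) ^ (n - i)

private lemma trm_sum (n m : ℕ) (hm : m ≤ n) :
    ∑ i ∈ range (n + 1), trm n m i = n ^ n := by
  have h := add_pow m (n - m) n
  rw [Nat.add_sub_cancel' hm] at h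
  rw [h]
  apply Finset.sum_congr rfl
  intro i _
  simp [trm]; ring

private lemma trm_step_up (n m j : ℕ) (hm : m ≤ n) (hj : j + 1 ≤ m) :
    trm n m j ≤ trm n m (j + 1) := by
  have hjn : j < n := lt_of_lt_of_le hj hm
  have key : n.choose j * (n - m) ≤ n.choose (j + 1) * m := by
    have h1 : n.choose (j + 1) * (j + 1) = n.choose j * (n - j) :=
      Nat.choose_succ_right_eq n j
    have h2 : (n - m) * (j + 1) ≤ (n - j) * m := by
      calc (n - m) * (j + 1) ≤ (n - m) * m := by
            exact Nat.mul_le_mul_left _ hj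
        _ ≤ (n - j) * m := Nat.mul_le_mul_right _ (Nat.sub_le_sub_left (le_of_lt hj) n)
    have := calc n.choose j * (n - m) * (j + 1) = n.choose j * ((n - m) * (j + 1)) := by ring
      _ ≤ n.choose j * ((n - j) * m) := Nat.mul_le_mul_left _ h2
      _ = n.choose j * (n - j) * m := by ring
      _ = n.choose (j + 1) * (j + 1) * m := by rw [h1]
      _ = n.choose (j + 1) * m * (j + 1) := by ring
    exact Nat.le_of_mul_le_mul_right this (Nat.succ_pos j)
  have hpow : (n - m) ^ (n - j) = (n - m) * (n - m) ^ (n - (j + 1)) := by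
    have : n - j = (n - (j + 1)) + 1 := by omega
    rw [this, pow_succ]; ring
  calc trm n m j = (n.choose j * (n - m)) * (m ^ j * (n - m) ^ (n - (j + 1))) := by
        simp [trm, hpow]; ring
    _ ≤ (n.choose (j + 1) * m) * (m ^ j * (n - m) ^ (n - (j + 1))) :=
        Nat.mul_le_mul_right _ key
    _ = trm n m (j + 1) := by simp [trm, pow_succ]; ring

private lemma trm_step_down (n m j : ℕ) (hm : m ≤ j) :
    trm n m (j + 1) ≤ trm n m j := by
  by_cases hjn : j < n
  · have key : n.choose (j + 1) * m ≤ n.choose j * (n - m) := by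
      have h1 : n.choose (j + 1) * (j + 1) = n.choose j * (n - j) :=
        Nat.choose_succ_right_eq n j
      have h2 : (n - j) * m ≤ (n - m) * (j + 1) := by
        calc (n - j) * m ≤ (n - m) * m := Nat.mul_le_mul_right _ (Nat.sub_le_sub_left hm n)
          _ ≤ (n - m) * (j + 1) := Nat.mul_le_mul_left _ (by omega)
      have := calc n.choose (j + 1) * m * (j + 1) = n.choose (j + 1) * (j + 1) * m := by ring
        _ = n.choose j * (n - j) * m := by rw [h1]
        _ = n.choose j * ((n - j) * m) := by ring
        _ ≤ n.choose j * ((n - m) * (j + 1)) := Nat.mul_le_mul_left _ h2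
        _ = n.choose j * (n - m) * (j + 1) := by ring
      exact Nat.le_of_mul_le_mul_right this (Nat.succ_pos j)
    have hpow : (n - m) ^ (n - j) = (n - m) * (n - m) ^ (n - (j + 1)) := by
      have : n - j = (n - (j + 1)) + 1 := by omega
      rw [this, pow_succ]; ring
    calc trm n m (j + 1) = (n.choose (j + 1) * m) * (m ^ j * (n - m) ^ (n - (j + 1))) := by
          simp [trm, pow_succ]; ring
      _ ≤ (n.choose j * (n - m)) * (m ^ j * (n - m) ^ (n - (j + 1))) :=
          Nat.mul_le_mul_right _ key
      _ = trm n m j := by simp [trm, hpow]; ring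
  · have : n.choose (j + 1) = 0 := Nat.choose_eq_zero_of_lt (by omega)
    simp [trm, this]

private lemma trm_le_max (n m i : ℕ) (hm : m ≤ n) : trm n m i ≤ trm n m m := by
  have up : ∀ d, trm n m (m - d) ≤ trm n m m := by
    intro d
    induction d with
    | zero => simp
    | succ e ih =>
      rcases le_or_gt m e with h | h
      · have : m - (e + 1) = m - e := by omega
        rw [this]; exact ih
      · have h2 : m - (e + 1) + 1 = m - e := by omega
        calc trm n m (m - (e + 1)) ≤ trm n m (m - (e + 1) + 1) :=
              trm_step_up n m _ hm (by omega)
          _ = trm n m (m - e) := by rw [h2]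
          _ ≤ trm n m m := ih
  have down : ∀ d, trm n m (m + d) ≤ trm n m m := by
    intro d
    induction d with
    | zero => simp
    | succ e ih =>
      calc trm n m (m + (e + 1)) = trm n m ((m + e) + 1) := by ring_nf
        _ ≤ trm n m (m + e) := trm_step_down n m _ (by omega)
        _ ≤ trm n m m := ih
  rcases le_or_gt i m with h | h
  · have : i = m - (m - i) := by omega
    rw [this]; exact up _
  · have : i = m + (i - m) := by omega
    rw [this]; exact down _

private lemma choose_lower (n m : ℕ) (hm : m ≤ n) :
    n ^ n ≤ (n + 1) * (n.choose m * m ^ m * (n - m) ^ (n - m)) := by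
  calc n ^ n = ∑ i ∈ range (n + 1), trm n m i := (trm_sum n m hm).symm
    _ ≤ ∑ _i ∈ range (n + 1), trm n m m :=
        Finset.sum_le_sum fun i _ => trm_le_max n m i hm
    _ = (n + 1) * trm n m m := by rw [Finset.sum_const, card_range, smul_eq_mul]
    _ = (n + 1) * (n.choose m * m ^ m * (n - m) ^ (n - m)) := by simp [trm]

private lemma choose_upper (n m : ℕ) (hm : m ≤ n) :
    n.choose m * m ^ m * (n - m) ^ (n - m) ≤ n ^ n := by
  calc n.choose m * m ^ m * (n - m) ^ (n - m) = trm n m m := by simp [trm]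
    _ ≤ ∑ i ∈ range (n + 1), trm n m i :=
        Finset.single_le_sum (fun i _ => Nat.zero_le _) (by simp [Finset.mem_range]; omega)
    _ = n ^ n := trm_sum n m hm



open Real

private lemma rpow_self_nat (a : ℕ) (ha : 0 < (a:ℝ)) :
    (2:ℝ) ^ ((a:ℝ) * logb 2 (a:ℝ)) = (a:ℝ) ^ a := by
  rw [mul_comm, Real.rpow_mul (by norm_num), Real.rpow_logb two_pos (by norm_num) ha,
    Real.rpow_natCast]

private lemma twoPow_entropy (n m : ℕ) (h0 : 0 < m) (h1 : m < n) :
    (2:ℝ) ^ ((n:ℝ) * binEnt ((m:ℝ) / (n:ℝ))) =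
      (n:ℝ) ^ (n:ℕ) / ((m:ℝ) ^ (m:ℕ) * ((n - m : ℕ):ℝ) ^ ((n - m : ℕ))) := by
  have hM : (0:ℝ) < (m:ℝ) := by exact_mod_cast h0
  have hN : (0:ℝ) < (n:ℝ) := by exact_mod_cast h0.trans h1
  have hR : (0:ℝ) < ((n - m : ℕ):ℝ) := by
    have : 0 < n - m := by omega
    exact_mod_cast this
  have hcast : ((n - m : ℕ):ℝ) = (n:ℝ) - (m:ℝ) := by
    exact_mod_cast Nat.cast_sub h1.le
  have h2 : (1:ℝ) - (m:ℝ)/(n:ℝ) = ((n - m : ℕ):ℝ)/(n:ℝ) := by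
    rw [hcast]; field_simp
  have key : (n:ℝ) * binEnt ((m:ℝ)/(n:ℝ)) =
      (n:ℝ) * logb 2 (n:ℝ) - (m:ℝ) * logb 2 (m:ℝ)
        - ((n - m : ℕ):ℝ) * logb 2 ((n - m : ℕ):ℝ) := by
    unfold binEnt
    rw [h2, Real.logb_div hM.ne' hN.ne', Real.logb_div hR.ne' hN.ne']
    have hMR : (m:ℝ) + ((n - m : ℕ):ℝ) = (n:ℝ) := by rw [hcast]; ring
    field_simp
    linear_combination (logb 2 (n:ℝ)) * hMR
  rw [key]
  rw [sub_sub, Real.rpow_sub two_pos, Real.rpow_add two_pos,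
    rpow_self_nat n hN, rpow_self_nat m hM, rpow_self_nat (n - m) hR]

private lemma choose_le_twoPow (n m : ℕ) (h0 : 0 < m) (h1 : m < n)
    (hnat : n.choose m * m ^ m * (n - m) ^ (n - m) ≤ n ^ n) :
    (n.choose m : ℝ) ≤ (2:ℝ) ^ ((n:ℝ) * binEnt ((m:ℝ) / (n:ℝ))) := by
  have hM : (0:ℝ) < (m:ℝ) ^ (m:ℕ) := by positivity
  have hR : (0:ℝ) < ((n - m : ℕ):ℝ) ^ (n - m : ℕ) := by
    have : (0:ℝ) < ((n - m : ℕ):ℝ) := by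
      have : 0 < n - m := by omega
      exact_mod_cast this
    positivity
  rw [twoPow_entropy n m h0 h1, le_div_iff₀ (by positivity)]
  calc (n.choose m : ℝ) * ((m:ℝ) ^ (m:ℕ) * ((n - m : ℕ):ℝ) ^ (n - m : ℕ))
      = ((n.choose m * m ^ m * (n - m) ^ (n - m) : ℕ) : ℝ) := by push_cast; ring
    _ ≤ ((n ^ n : ℕ) : ℝ) := by exact_mod_cast hnat
    _ = (n:ℝ) ^ (n:ℕ) := by push_cast; ring

private lemma twoPow_le_choose (n m : ℕ) (h0 : 0 < m) (h1 : m < n)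
    (hnat : n ^ n ≤ (n + 1) * (n.choose m * m ^ m * (n - m) ^ (n - m))) :
    (2:ℝ) ^ ((n:ℝ) * binEnt ((m:ℝ) / (n:ℝ))) ≤ ((n:ℝ) + 1) * (n.choose m : ℝ) := by
  have hR0 : (0:ℝ) < ((n - m : ℕ):ℝ) := by
    have : 0 < n - m := by omega
    exact_mod_cast this
  rw [twoPow_entropy n m h0 h1, div_le_iff₀ (by positivity)]
  calc (n:ℝ) ^ (n:ℕ) = ((n ^ n : ℕ) : ℝ) := by push_cast; ring
    _ ≤ (((n + 1) * (n.choose m * m ^ m * (n - m) ^ (n - m)) : ℕ) : ℝ) := by exact_mod_cast hnat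
    _ = ((n:ℝ) + 1) * (n.choose m : ℝ) * ((m:ℝ) ^ (m:ℕ) * ((n - m : ℕ):ℝ) ^ (n - m : ℕ)) := by
        push_cast; ring


open Finset

private lemma choose_mono_left {n r s : ℕ} (h : r ≤ s) (hs : s ≤ n / 2) :
    n.choose r ≤ n.choose s := by
  induction s with
  | zero =>
    have : r = 0 := by omega
    simp [this]
  | succ t ih =>
    rcases Nat.eq_or_lt_of_le h with he | hlt
    · rw [he]
    · have h1 : n.choose r ≤ n.choose t := ih (by omega) (by omega)
      exact h1.trans (Nat.choose_le_succ_of_lt_half_left (by omega))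

private lemma bad_count {n k : ℕ} (hn : 2 * k ≤ n) (S : Finset (Fin n)) (hS : S.card = k) :
    (((univ : Finset (Fin n)).powersetCard k).filter
        (fun T => k < 2 * (S ∩ T).card)).card ≤ 2 ^ k * (n - k).choose (k / 2) := by
  classical
  set bad := (((univ : Finset (Fin n)).powersetCard k).filter
      (fun T => k < 2 * (S ∩ T).card)) with hbad
  have hmem : ∀ T ∈ bad, T ∩ S ∈ S.powerset.filter (fun A => k < 2 * A.card) := by
    intro T hT
    rw [hbad, mem_filter] at hT
    rw [mem_filter, mem_powerset]
    exact ⟨inter_subset_right, by rw [inter_comm]; exact hT.2⟩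
  rw [Finset.card_eq_sum_card_fiberwise hmem]
  have hfib : ∀ A ∈ S.powerset.filter (fun A => k < 2 * A.card),
      (bad.filter (fun T => T ∩ S = A)).card ≤ (n - k).choose (k / 2) := by
    intro A hA
    rw [mem_filter, mem_powerset] at hA
    obtain ⟨hAS, hAcard⟩ := hA
    have hAk : A.card ≤ k := by
      calc A.card ≤ S.card := card_le_card hAS
        _ = k := hS
    have step1 : (bad.filter (fun T => T ∩ S = A)).card ≤
        (Sᶜ.powersetCard (k - A.card)).card := by
      apply Finset.card_le_card_of_injOn (fun T => T \ S)
      · intro T hT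
        rw [Finset.mem_coe, mem_filter, hbad, mem_filter, mem_powersetCard_univ] at hT
        obtain ⟨⟨hTcard, _⟩, hTA⟩ := hT
        rw [Finset.mem_coe, mem_powersetCard]
        constructor
        · intro x hx
          rw [mem_sdiff] at hx
          simpa using hx.2
        · have hc := Finset.card_sdiff_add_card_inter T S
          rw [hTA] at hc
          show (T \ S).card = k - A.card
          omega
      · intro T₁ h₁ T₂ h₂ he
        have h1' := (mem_filter.mp (Finset.mem_coe.mp h₁)).2
        have h2' := (mem_filter.mp (Finset.mem_coe.mp h₂)).2
        have e : ∀ T : Finset (Fin n), (T ∩ S) ∪ (T \ S) = T := by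
          intro T
          rw [Finset.union_comm, Finset.sdiff_union_inter]
        calc T₁ = (T₁ ∩ S) ∪ (T₁ \ S) := (e T₁).symm
          _ = A ∪ (T₂ \ S) := by rw [h1']; exact congrArg _ he
          _ = (T₂ ∩ S) ∪ (T₂ \ S) := by rw [h2']
          _ = T₂ := e T₂
    have step2 : (Sᶜ.powersetCard (k - A.card)).card = (n - k).choose (k - A.card) := by
      rw [card_powersetCard, card_compl, hS, Fintype.card_fin]
    have step3 : (n - k).choose (k - A.card) ≤ (n - k).choose (k / 2) :=
      choose_mono_left (by omega) (by omega)
    calc (bad.filter (fun T => T ∩ S = A)).card ≤ (Sᶜ.powersetCard (k - A.card)).card := step1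
      _ = (n - k).choose (k - A.card) := step2
      _ ≤ (n - k).choose (k / 2) := step3
  calc ∑ A ∈ S.powerset.filter (fun A => k < 2 * A.card),
        (bad.filter (fun T => T ∩ S = A)).card
      ≤ ∑ _A ∈ S.powerset.filter (fun A => k < 2 * A.card), (n - k).choose (k / 2) :=
        Finset.sum_le_sum hfib
    _ = (S.powerset.filter (fun A => k < 2 * A.card)).card * (n - k).choose (k / 2) := by
        rw [Finset.sum_const, smul_eq_mul]
    _ ≤ 2 ^ k * (n - k).choose (k / 2) := by
        apply Nat.mul_le_mul_right
        calc (S.powerset.filter (fun A => k < 2 * A.card)).card ≤ S.powerset.card :=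
              card_le_card (filter_subset _ _)
          _ = 2 ^ k := by rw [card_powerset, hS]

open Real Filter

private lemma eventually_big (c : ℝ) (hc : 0 < c) (a : ℕ) :
    ∃ k₀ : ℕ, ∀ k : ℕ, k₀ ≤ k → ((a : ℝ) * k + 1) < (2:ℝ) ^ (c * (k:ℝ)) := by
  have hcl : 0 < c * Real.log 2 := by positivity
  have h1 : Tendsto (fun k : ℕ => (c * Real.log 2) * (k:ℝ)) atTop atTop :=
    Tendsto.const_mul_atTop hcl tendsto_natCast_atTop_atTop
  have h2 : Tendsto (fun k : ℕ =>
      Real.exp ((c * Real.log 2) * (k:ℝ)) / ((c * Real.log 2) * (k:ℝ)) ^ 1) atTop atTop :=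
    (Real.tendsto_exp_div_pow_atTop 1).comp h1
  simp only [pow_one] at h2
  have h3 := h2.eventually_ge_atTop (((a:ℝ) + 2) / (c * Real.log 2))
  obtain ⟨k₀, hk₀⟩ := eventually_atTop.mp h3
  refine ⟨max k₀ 1, fun k hk => ?_⟩
  have hk1 : 1 ≤ k := le_trans (le_max_right _ _) hk
  have hkr : (1:ℝ) ≤ (k:ℝ) := by exact_mod_cast hk1
  have hkey := hk₀ k (le_trans (le_max_left _ _) hk)
  have hpos : 0 < (c * Real.log 2) * (k:ℝ) := by positivity
  have h4 : ((a:ℝ) + 2) * (k:ℝ) ≤ Real.exp ((c * Real.log 2) * (k:ℝ)) := by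
    calc ((a:ℝ) + 2) * (k:ℝ)
          = (((a:ℝ) + 2) / (c * Real.log 2)) * ((c * Real.log 2) * (k:ℝ)) := by
            field_simp
        _ ≤ (Real.exp ((c * Real.log 2) * (k:ℝ)) / ((c * Real.log 2) * (k:ℝ)))
              * ((c * Real.log 2) * (k:ℝ)) := by
            exact mul_le_mul_of_nonneg_right hkey hpos.le
        _ = Real.exp ((c * Real.log 2) * (k:ℝ)) :=
            div_mul_cancel₀ _ hpos.ne'
  have h5 : (2:ℝ) ^ (c * (k:ℝ)) = Real.exp ((c * Real.log 2) * (k:ℝ)) := by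
    rw [Real.rpow_def_of_pos two_pos]
    ring_nf
  rw [h5]
  calc (a:ℝ) * k + 1 < (a:ℝ) * k + 2 * k := by nlinarith
    _ = ((a:ℝ) + 2) * k := by ring
    _ ≤ Real.exp ((c * Real.log 2) * (k:ℝ)) := h4

open Finset

private lemma greedy {n k : ℕ} (hk : 0 < k) (hn : 2 * k ≤ n) (M : ℕ)
    (hM : M * (2 ^ k * (n - k).choose (k / 2)) < n.choose k) :
    ∃ 𝒮 : Finset (Finset (Fin n)), 𝒮.card = M ∧ (∀ S ∈ 𝒮, S.card = k) ∧
      ∀ S ∈ 𝒮, ∀ S' ∈ 𝒮, S ≠ S' → 2 * (S ∩ S').card ≤ k := by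
  classical
  set B := 2 ^ k * (n - k).choose (k / 2) with hB
  suffices h : ∀ j : ℕ, j ≤ M → ∃ 𝒮 : Finset (Finset (Fin n)), 𝒮.card = j ∧
      (∀ S ∈ 𝒮, S.card = k) ∧
      ∀ S ∈ 𝒮, ∀ S' ∈ 𝒮, S ≠ S' → 2 * (S ∩ S').card ≤ k by
    exact h M le_rfl
  intro j
  induction j with
  | zero => exact fun _ => ⟨∅, by simp⟩
  | succ i ih =>
    intro hiM
    obtain ⟨𝒮, hcard, hsz, hpair⟩ := ih (by omega)
    set bad := ((univ : Finset (Fin n)).powersetCard k).filter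
        (fun T => ∃ S ∈ 𝒮, k < 2 * (S ∩ T).card) with hbaddef
    have hbadsub : bad ⊆ 𝒮.biUnion (fun S =>
        ((univ : Finset (Fin n)).powersetCard k).filter (fun T => k < 2 * (S ∩ T).card)) := by
      intro T hT
      rw [hbaddef, mem_filter] at hT
      obtain ⟨hT1, S, hS𝒮, hS2⟩ := hT
      rw [mem_biUnion]
      exact ⟨S, hS𝒮, mem_filter.mpr ⟨hT1, hS2⟩⟩
    have hbadcard : bad.card < n.choose k := by
      calc bad.card ≤ ∑ S ∈ 𝒮, (((univ : Finset (Fin n)).powersetCard k).filter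
            (fun T => k < 2 * (S ∩ T).card)).card :=
            (card_le_card hbadsub).trans (card_biUnion_le)
        _ ≤ ∑ _S ∈ 𝒮, B := Finset.sum_le_sum fun S hS => bad_count hn S (hsz S hS)
        _ = i * B := by rw [Finset.sum_const, hcard, smul_eq_mul]
        _ ≤ M * B := Nat.mul_le_mul_right _ (by omega)
        _ < n.choose k := hM
    have hex : ∃ T ∈ (univ : Finset (Fin n)).powersetCard k, T ∉ bad := by
      by_contra hcon
      push_neg at hcon
      have : (univ : Finset (Fin n)).powersetCard k ⊆ bad := fun T hT => hcon T hT
      have := card_le_card this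
      rw [card_powersetCard, card_univ, Fintype.card_fin] at this
      omega
    obtain ⟨T, hTmem, hTgood⟩ := hex
    rw [hbaddef, mem_filter] at hTgood
    push_neg at hTgood
    have hTgood' : ∀ S ∈ 𝒮, 2 * (S ∩ T).card ≤ k := hTgood hTmem
    have hTk : T.card = k := by
      rw [mem_powersetCard_univ] at hTmem
      exact hTmem
    have hTnot : T ∉ 𝒮 := by
      intro hT𝒮
      have := hTgood' T hT𝒮
      rw [inter_self, hTk] at this
      omega
    refine ⟨insert T 𝒮, ?_, ?_, ?_⟩
    · rw [card_insert_of_notMem hTnot, hcard]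
    · intro S hS
      rcases mem_insert.mp hS with rfl | hS'
      · exact hTk
      · exact hsz S hS'
    · intro S hS S' hS' hne
      rcases mem_insert.mp hS with rfl | h1 <;> rcases mem_insert.mp hS' with rfl | h2
      · exact absurd rfl hne
      · rw [inter_comm]
        exact hTgood' S' h2
      · exact hTgood' S h1
      · exact hpair S h1 S' h2 hne



/-- Existence of a `(k, α, β)`-set: a family of `2^{βk}` subsets of `{1,…,αk}`,
each of size `k`, with pairwise intersections of size at most `k/2`. -/
theorem stmt0 (α : ℕ) (hα : 2 ≤ α) (β : ℝ) (hβ0 : 0 < β)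
    (hβ : β < (1 / 2) * ((α : ℝ) * binEnt (1 / (α : ℝ))
        - ((α : ℝ) - 1) * binEnt (1 / (2 * ((α : ℝ) - 1))) - 1)) :
    ∃ k₀ : ℕ, ∀ k : ℕ, k₀ ≤ k →
      ∃ 𝒮 : Finset (Finset (Fin (α * k))),
        (∀ S ∈ 𝒮, S.card = k) ∧
        𝒮.card = ⌊(2 : ℝ) ^ (β * k)⌋₊ ∧
        ∀ S ∈ 𝒮, ∀ S' ∈ 𝒮, S ≠ S' → ((S ∩ S').card : ℝ) ≤ (k : ℝ) / 2 := by
  classical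
  have hα1 : (1:ℝ) ≤ ((α:ℝ) - 1) := by
    have h2 : (2:ℝ) ≤ (α:ℝ) := by exact_mod_cast hα
    linarith
  have hαR : (0:ℝ) < (α:ℝ) := by linarith
  set H1 := binEnt (1 / (α:ℝ)) with hH1
  set H2 := binEnt (1 / (2 * ((α:ℝ) - 1))) with hH2
  set D := (α:ℝ) * H1 - ((α:ℝ) - 1) * H2 - 1 with hDdef
  have hβD : β < D / 2 := by rw [hDdef]; linarith [hβ]
  have hDβ : 0 < D - β := by linarith
  obtain ⟨k₁, hk₁⟩ := eventually_big (D - β) hDβ α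
  refine ⟨max k₁ 2, fun k hk => ?_⟩
  have hk2 : 2 ≤ k := le_trans (le_max_right _ _) hk
  have hkk1 : k₁ ≤ k := le_trans (le_max_left _ _) hk
  have hk0 : 0 < k := by omega
  have hkR : (0:ℝ) < (k:ℝ) := by exact_mod_cast hk0
  have h2k : 2 * k ≤ α * k := Nat.mul_le_mul_right k hα
  have hnk : α * k - k = (α - 1) * k := by rw [Nat.sub_one_mul]
  set N' := (α - 1) * k with hN'
  set m' := k / 2 with hm'
  have hm'0 : 0 < m' := by omega
  have hkleN' : k ≤ N' := by
    rw [hN']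
    calc k = 1 * k := (one_mul k).symm
      _ ≤ (α - 1) * k := Nat.mul_le_mul_right k (by omega)
  have hm'N' : m' < N' := by omega
  have hN'cast : ((N':ℕ):ℝ) = ((α:ℝ) - 1) * (k:ℝ) := by
    rw [hN', Nat.cast_mul, Nat.cast_sub (by omega : 1 ≤ α), Nat.cast_one]
  have hN'pos : (0:ℝ) < ((N':ℕ):ℝ) := by
    rw [hN'cast]; positivity
  -- upper bound for the small binomial coefficient
  have hCupper : ((N'.choose m' : ℕ):ℝ) ≤ (2:ℝ) ^ (((N':ℕ):ℝ) * binEnt ((m':ℝ)/((N':ℕ):ℝ))) :=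
    choose_le_twoPow N' m' hm'0 hm'N' (choose_upper N' m' hm'N'.le)
  have hm'le : (m':ℝ) ≤ (k:ℝ)/2 := by
    rw [hm']
    exact_mod_cast Nat.cast_div_le
  have hratio : ((m':ℝ)/((N':ℕ):ℝ)) ≤ 1 / (2 * ((α:ℝ) - 1)) := by
    rw [div_le_div_iff₀ hN'pos (by linarith)]
    calc (m':ℝ) * (2*((α:ℝ)-1)) ≤ ((k:ℝ)/2) * (2*((α:ℝ)-1)) :=
          mul_le_mul_of_nonneg_right hm'le (by linarith)
      _ = ((α:ℝ)-1)*(k:ℝ) := by ring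
      _ = 1 * ((N':ℕ):ℝ) := by rw [hN'cast]; ring
  have hhalf : 1 / (2 * ((α:ℝ) - 1)) ≤ 1/2 := by
    apply div_le_div_of_nonneg_left (by norm_num) (by norm_num) (by linarith)
  have hmonoH : binEnt ((m':ℝ)/((N':ℕ):ℝ)) ≤ H2 := by
    rw [hH2]
    exact binEnt_mono (by positivity) hratio hhalf
  have hC2 : ((N'.choose m' : ℕ):ℝ) ≤ (2:ℝ) ^ (((N':ℕ):ℝ) * H2) := by
    refine hCupper.trans ?_
    apply Real.rpow_le_rpow_of_exponent_le one_le_two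
    exact mul_le_mul_of_nonneg_left hmonoH hN'pos.le
  -- lower bound for the big binomial coefficient
  have hkltn : k < α * k := by omega
  have hNlower := twoPow_le_choose (α*k) k hk0 hkltn (choose_lower (α*k) k hkltn.le)
  have hncast : ((α*k:ℕ):ℝ) = (α:ℝ)*(k:ℝ) := by push_cast; ring
  have hfrac : (k:ℝ)/((α*k:ℕ):ℝ) = 1/(α:ℝ) := by
    rw [hncast]
    field_simp
  rw [hfrac] at hNlower
  rw [← hH1] at hNlower
  -- the floor bound
  have hMfloor : ((⌊(2:ℝ) ^ (β * k)⌋₊ : ℕ):ℝ) ≤ (2:ℝ) ^ (β * k) :=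
    Nat.floor_le (by positivity)
  set M := ⌊(2:ℝ) ^ (β * (k:ℝ))⌋₊ with hM
  -- exponent bookkeeping
  set E := β*(k:ℝ) + ((k:ℝ) + ((N':ℕ):ℝ)*H2) with hE
  have hexp : E + (D-β)*(k:ℝ) = ((α*k:ℕ):ℝ) * H1 := by
    rw [hE, hN'cast, hncast, hDdef]; ring
  have hEsplit : (2:ℝ)^E = (2:ℝ)^(β*(k:ℝ)) * ((2:ℝ)^(k:ℕ) * (2:ℝ)^(((N':ℕ):ℝ)*H2)) := by
    rw [hE, Real.rpow_add two_pos, Real.rpow_add two_pos, Real.rpow_natCast]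
  have hEbig : (2:ℝ)^E * (((α*k:ℕ):ℝ)+1) < (((α*k:ℕ):ℝ)+1) * (((α*k).choose k : ℕ):ℝ) := by
    calc (2:ℝ)^E * (((α*k:ℕ):ℝ)+1) < (2:ℝ)^E * (2:ℝ)^((D-β)*(k:ℝ)) := by
          apply mul_lt_mul_of_pos_left ?_ (by positivity)
          rw [hncast]
          exact hk₁ k hkk1
      _ = (2:ℝ)^(((α*k:ℕ):ℝ) * H1) := by rw [← Real.rpow_add two_pos, hexp]
      _ ≤ (((α*k:ℕ):ℝ)+1) * (((α*k).choose k : ℕ):ℝ) := hNlower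
  have hfin : (2:ℝ)^E < (((α*k).choose k : ℕ):ℝ) := by
    have hpos : (0:ℝ) < ((α*k:ℕ):ℝ)+1 := by positivity
    rw [mul_comm ((2:ℝ)^E) _] at hEbig
    exact lt_of_mul_lt_mul_left hEbig hpos.le
  have hkey : ((M * (2^k * N'.choose m') : ℕ):ℝ) < (((α*k).choose k : ℕ):ℝ) := by
    calc ((M * (2^k * N'.choose m') : ℕ):ℝ)
        = (M:ℝ) * ((2:ℝ)^(k:ℕ) * ((N'.choose m' : ℕ):ℝ)) := by push_cast; ring
      _ ≤ (2:ℝ)^(β*(k:ℝ)) * ((2:ℝ)^(k:ℕ) * (2:ℝ)^(((N':ℕ):ℝ)*H2)) := by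
          apply mul_le_mul hMfloor (mul_le_mul_of_nonneg_left hC2 (by positivity))
            (by positivity) (by positivity)
      _ = (2:ℝ)^E := hEsplit.symm
      _ < (((α*k).choose k : ℕ):ℝ) := hfin
  have hnat : M * (2 ^ k * ((α*k - k).choose (k/2))) < (α*k).choose k := by
    rw [hnk, ← hm']
    exact_mod_cast hkey
  obtain ⟨𝒮, hcard, hsz, hpair⟩ := greedy hk0 h2k M hnat
  refine ⟨𝒮, hsz, hcard, ?_⟩
  intro S hS S' hS' hne
  have hp := hpair S hS S' hS' hne
  have hpr : 2 * ((S ∩ S').card : ℝ) ≤ (k:ℝ) := by exact_mod_cast hp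
  linarith
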